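/- A group G satisfies: for each 2-coloring of G there is an infinite almost-monochromatic subsemigroup of G, if and only if G contains a subgroup isomorphic to ⊕_n ℤ/2. -/

import Mathlib

open Function

/-! ### Generic finite-product helpers -/

private lemma fp_exists_finset {M : Type*} [CommMonoid M] {s : Stream' M} {x : M}
    (hx : x ∈ Hindman.FP s) : ∃ A : Finset ℕ, A.Nonempty ∧ x = ∏ i ∈ A, s.get i := by
  induction hx with
  | head' a => exact ⟨{0}, ⟨0, by simp⟩, by simp⟩
  | tail' a m h ih =>
      obtain ⟨A, hne, hp⟩ := ih
      refine ⟨A.image (· + 1), hne.image _, ?_⟩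
      rw [Finset.prod_image ((add_left_injective 1).injOn)]
      simpa [Stream'.get_tail] using hp
  | cons' a m h ih =>
      obtain ⟨A, hne, hp⟩ := ih
      subst hp
      refine ⟨insert 0 (A.image (· + 1)), ⟨0, Finset.mem_insert_self _ _⟩, ?_⟩
      rw [Finset.prod_insert (by simp), Finset.prod_image ((add_left_injective 1).injOn)]
      simp only [Stream'.get_tail]

private lemma prod_mul_prod_eq {M : Type*} [CommMonoid M] (h2 : ∀ x : M, x * x = 1)
    (g : ℕ → M) (A B : Finset ℕ) :
    (∏ i ∈ A, g i) * (∏ i ∈ B, g i) = ∏ i ∈ (A \ B) ∪ (B \ A), g i := by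
  classical
  have hA : A = (A \ B) ∪ (A ∩ B) := by
    ext i; simp [Finset.mem_sdiff, Finset.mem_inter]; tauto
  have hB : B = (B \ A) ∪ (A ∩ B) := by
    ext i; simp [Finset.mem_sdiff, Finset.mem_inter]; tauto
  have dAB : Disjoint (A \ B) (A ∩ B) := by
    rw [Finset.disjoint_left]; intro i hi hi2
    simp [Finset.mem_sdiff, Finset.mem_inter] at hi hi2; tauto
  have dBA : Disjoint (B \ A) (A ∩ B) := by
    rw [Finset.disjoint_left]; intro i hi hi2
    simp [Finset.mem_sdiff, Finset.mem_inter] at hi hi2; tauto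
  have dS : Disjoint (A \ B) (B \ A) := by
    rw [Finset.disjoint_left]; intro i hi hi2
    simp [Finset.mem_sdiff] at hi hi2; tauto
  have hq : (∏ i ∈ A ∩ B, g i) * (∏ i ∈ A ∩ B, g i) = 1 := by
    rw [← Finset.prod_mul_distrib]
    exact Finset.prod_eq_one fun i _ => h2 (g i)
  have e1 : ∏ i ∈ A, g i = (∏ i ∈ A \ B, g i) * ∏ i ∈ A ∩ B, g i := by
    conv_lhs => rw [hA]
    exact Finset.prod_union dAB
  have e2 : ∏ i ∈ B, g i = (∏ i ∈ B \ A, g i) * ∏ i ∈ A ∩ B, g i := by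
    conv_lhs => rw [hB]
    exact Finset.prod_union dBA
  rw [e1, e2, Finset.prod_union dS]
  calc (∏ i ∈ A \ B, g i) * (∏ i ∈ A ∩ B, g i) * ((∏ i ∈ B \ A, g i) * (∏ i ∈ A ∩ B, g i))
      = ((∏ i ∈ A \ B, g i) * (∏ i ∈ B \ A, g i)) * ((∏ i ∈ A ∩ B, g i) * (∏ i ∈ A ∩ B, g i)) := by
        rw [mul_mul_mul_comm]
    _ = (∏ i ∈ A \ B, g i) * (∏ i ∈ B \ A, g i) := by rw [hq, mul_one]

/-! ### The backward direction -/

private abbrev DS2 := DirectSum ℕ (fun _ => ZMod 2)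

private lemma ds2_add_self (y : DS2) : y + y = 0 := by
  refine DFinsupp.ext fun i => ?_
  have : ∀ z : ZMod 2, z + z = 0 := by decide
  simp [DirectSum.add_apply, this]

private lemma mds2_mul_self (x : Multiplicative DS2) : x * x = 1 := ds2_add_self x

private noncomputable def genStream : Stream' (Multiplicative DS2) :=
  fun n => Multiplicative.ofAdd (DirectSum.of (fun _ => ZMod 2) n 1)

private lemma genprod_ne_one (A : Finset ℕ) (hA : A.Nonempty) :
    (∏ i ∈ A, genStream.get i) ≠ 1 := by
  classical
  obtain ⟨a, ha⟩ := hA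
  intro hcon
  have h1 : Multiplicative.toAdd (∏ i ∈ A, genStream.get i) =
      ∑ i ∈ A, DirectSum.of (fun _ => ZMod 2) i 1 := by
    rw [toAdd_prod]
    rfl
  have h2 : (∑ i ∈ A, DirectSum.of (fun _ => ZMod 2) i 1) a = 1 := by
    rw [DFinsupp.finset_sum_apply]
    rw [Finset.sum_eq_single a]
    · exact DirectSum.of_eq_same a 1
    · intro b _ hb; exact DirectSum.of_eq_of_ne _ _ _ hb.symm
    · intro h; exact absurd ha h
  rw [hcon] at h1
  rw [← h1] at h2
  simp at h2

private lemma backward_dir {G : Type*} [Group G]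
    (f : Multiplicative DS2 →* G) (hf : Function.Injective f) (c : G → Fin 2) :
    ∃ T : Subsemigroup G, Infinite T ∧
      ∃ col : Fin 2, {x ∈ (T : Set G) | c x ≠ col}.Finite := by
  classical
  set M := Multiplicative DS2
  -- sets of each color inside the FP-set of generators
  set S : Fin 2 → Set M := fun j => {x : M | x ∈ Hindman.FP genStream ∧ c (f x) = j} with hS
  have hfin2 : ∀ a : Fin 2, a = 0 ∨ a = 1 := by decide
  obtain ⟨cl, hcl, b, hb⟩ := Hindman.FP_partition_regular genStream {S 0, S 1}
    (by simp)
    (by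
      intro x hx
      rcases hfin2 (c (f x)) with h | h
      · exact ⟨S 0, by simp, ⟨hx, h⟩⟩
      · exact ⟨S 1, by simp, ⟨hx, h⟩⟩)
  obtain ⟨col, rfl⟩ : ∃ col : Fin 2, cl = S col := by
    rcases hcl with h | h
    · exact ⟨0, h⟩
    · exact ⟨1, by simpa using h⟩
  -- every FP b element is an FP genStream element of color col
  have hbFP : ∀ x ∈ Hindman.FP b, x ∈ Hindman.FP genStream ∧ c (f x) = col := fun x hx => hb hx
  have hb_ne_one : ∀ x ∈ Hindman.FP b, x ≠ 1 := by
    intro x hx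
    obtain ⟨A, hA, hAx⟩ := fp_exists_finset (hbFP x hx).1
    rw [hAx]; exact genprod_ne_one A hA
  -- the subsemigroup
  refine ⟨{ carrier := f '' (Hindman.FP b ∪ {1}),
            mul_mem' := ?_ }, ?_, col, ?_⟩
  · rintro _ _ ⟨x, hx, rfl⟩ ⟨y, hy, rfl⟩
    rw [← map_mul]
    refine ⟨x * y, ?_, rfl⟩
    rcases hx with hx | hx
    · rcases hy with hy | hy
      · obtain ⟨A, hA, rfl⟩ := fp_exists_finset hx
        obtain ⟨B, hB, rfl⟩ := fp_exists_finset hy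
        rw [prod_mul_prod_eq mds2_mul_self]
        rcases Finset.eq_empty_or_nonempty ((A \ B) ∪ (B \ A)) with h | h
        · rw [h, Finset.prod_empty]; exact Or.inr rfl
        · exact Or.inl (Hindman.FP.finset_prod b _ h)
      · simp only [Set.mem_singleton_iff] at hy; subst hy
        rw [mul_one]; exact Or.inl hx
    · simp only [Set.mem_singleton_iff] at hx; subst hx
      rw [one_mul]; exact hy
  · -- infiniteness via partial products
    set p : ℕ → M := fun n => ∏ i ∈ Finset.range (n + 1), b.get i with hp
    have hpFP : ∀ n, p n ∈ Hindman.FP b := fun n =>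
      Hindman.FP.finset_prod b _ ⟨0, by simp⟩
    have hlt : ∀ n m : ℕ, n < m → p n ≠ p m := by
      intro n m hnm hcon
      have key : p n * p m = ∏ i ∈ (Finset.range (m + 1)) \ (Finset.range (n + 1)), b.get i := by
        rw [hp]
        rw [prod_mul_prod_eq mds2_mul_self]
        congr 1
        rw [Finset.sdiff_eq_empty_iff_subset.2 (by
          intro i hi; simp at hi ⊢; omega), Finset.empty_union]
      have hne : ((Finset.range (m + 1)) \ (Finset.range (n + 1))).Nonempty := by
        refine ⟨m, ?_⟩; simp; omega
      have h1 : p n * p m ≠ 1 := by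
        rw [key]
        exact hb_ne_one _ (Hindman.FP.finset_prod b _ hne)
      rw [hcon] at h1
      exact h1 (mds2_mul_self _)
    have hpinj : Function.Injective p := by
      intro n m h
      by_contra hne
      rcases Nat.lt_or_ge n m with h1 | h1
      · exact hlt n m h1 h
      · exact hlt m n (by omega) h.symm
    have : (f '' (Hindman.FP b ∪ {1}) : Set G).Infinite :=
      Set.infinite_of_injective_forall_mem (f := fun n => f (p n))
        (hf.comp hpinj) (fun n => ⟨p n, Or.inl (hpFP n), rfl⟩)
    exact this.to_subtype
  · -- almost monochromatic
    have : {x ∈ (f '' (Hindman.FP b ∪ {1}) : Set G) | c x ≠ col} ⊆ {f 1} := by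
      rintro x ⟨⟨y, hy, rfl⟩, hne⟩
      rcases hy with hy | hy
      · exact absurd (hbFP y hy).2 hne
      · simp only [Set.mem_singleton_iff] at hy; subst hy; rfl
    exact (Set.finite_singleton _).subset this

open Function

section Forward

variable {G : Type*} [Group G]

/-- commensurability -/
private def Cmz (g h : G) : Prop := ∃ a b : ℤ, a ≠ 0 ∧ b ≠ 0 ∧ g ^ a = h ^ b

private lemma cmz_refl (g : G) : Cmz g g := ⟨1, 1, one_ne_zero, one_ne_zero, rfl⟩

private lemma cmz_symm {g h : G} (hc : Cmz g h) : Cmz h g := by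
  obtain ⟨a, b, ha, hb, hab⟩ := hc
  exact ⟨b, a, hb, ha, hab.symm⟩

private lemma cmz_trans {g h k : G} (h1 : Cmz g h) (h2 : Cmz h k) : Cmz g k := by
  obtain ⟨a, b, ha, hb, hab⟩ := h1
  obtain ⟨c, d, hc, hd, hcd⟩ := h2
  refine ⟨a * c, d * b, mul_ne_zero ha hc, mul_ne_zero hd hb, ?_⟩
  rw [zpow_mul, hab, ← zpow_mul, mul_comm b c, zpow_mul, hcd, ← zpow_mul, mul_comm d b]

private lemma cmz_not_finOrder {g h : G} (hg : ¬IsOfFinOrder g) (hc : Cmz g h) :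
    ¬IsOfFinOrder h := by
  intro hh
  obtain ⟨a, b, ha, hb, hab⟩ := hc
  obtain ⟨n, hn, hn1⟩ := isOfFinOrder_iff_pow_eq_one.1 hh
  apply hg
  have key : g ^ (a * n) = 1 := by
    rw [zpow_mul, hab, ← zpow_mul, mul_comm, zpow_mul]
    rw [zpow_natCast, hn1, one_zpow]
  have hne : a * (n : ℤ) ≠ 0 := mul_ne_zero ha (by exact_mod_cast hn.ne')
  refine isOfFinOrder_iff_pow_eq_one.2 ⟨(a * (n : ℤ)).natAbs, Int.natAbs_pos.2 hne, ?_⟩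
  have := congrArg (· ^ (1 : ℤ)) key
  rcases Int.natAbs_eq (a * (n : ℤ)) with h | h
  · rw [← zpow_natCast, ← h, key]
  · rw [← zpow_natCast, ← neg_neg ((a * (n:ℤ)).natAbs : ℤ), ← h, zpow_neg, key, inv_one]

/-- the representative of the commensurability class: least in a well-order -/
private noncomputable def repc (g : G) : G :=
  (IsWellFounded.wf (r := @WellOrderingRel G)).min {h | Cmz g h} ⟨g, cmz_refl g⟩

private lemma cmz_repc (g : G) : Cmz g (repc g) :=
  (IsWellFounded.wf (r := @WellOrderingRel G)).min_mem {h | Cmz g h} ⟨g, cmz_refl g⟩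

private lemma repc_eq {g h : G} (hgh : Cmz g h) : repc g = repc h := by
  have hm1 : Cmz h (repc g) := cmz_trans (cmz_symm hgh) (cmz_repc g)
  have hm2 : Cmz g (repc h) := cmz_trans hgh (cmz_repc h)
  by_contra hne
  rcases trichotomous_of WellOrderingRel (repc g) (repc h) with hlt | heq | hgt
  · exact (IsWellFounded.wf (r := @WellOrderingRel G)).not_lt_min
      {k | Cmz h k} hm1 hlt
  · exact hne heq
  · exact (IsWellFounded.wf (r := @WellOrderingRel G)).not_lt_min
      {k | Cmz g k} hm2 hgt

private lemma repc_not_finOrder {g : G} (hg : ¬IsOfFinOrder g) : ¬IsOfFinOrder (repc g) :=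
  cmz_not_finOrder hg (cmz_repc g)

private lemma qval_ex {g : G} (_hg : ¬IsOfFinOrder g) :
    ∃ p : ℤ × ℤ, 0 < p.1 ∧ p.2 ≠ 0 ∧ g ^ p.1 = repc g ^ p.2 := by
  obtain ⟨a, b, ha, hb, hab⟩ := cmz_repc g
  rcases lt_or_gt_of_ne ha with h | h
  · refine ⟨(-a, -b), by omega, by omega, ?_⟩
    simp only [zpow_neg, hab]
  · exact ⟨(a, b), h, hb, hab⟩

open Classical in
private noncomputable def qval (g : G) : ℚ :=
  if h : ∃ p : ℤ × ℤ, 0 < p.1 ∧ p.2 ≠ 0 ∧ g ^ p.1 = repc g ^ p.2 then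
    (|h.choose.2| : ℚ) / (h.choose.1 : ℚ)
  else 1

private lemma qval_eq {g : G} (hg : ¬IsOfFinOrder g) {a b : ℤ} (ha : 0 < a) (hb : b ≠ 0)
    (hab : g ^ a = repc g ^ b) : qval g = (|b| : ℚ) / (a : ℚ) := by
  have hex := qval_ex hg
  rw [qval, dif_pos hex]
  obtain ⟨ha', hb', hab'⟩ := hex.choose_spec
  set a' := hex.choose.1
  set b' := hex.choose.2
  -- g^(a*a') = repc g^(b*a') = repc g^(b'*a)
  have key : repc g ^ (b * a') = repc g ^ (b' * a) :=
    calc repc g ^ (b * a') = (repc g ^ b) ^ a' := by rw [zpow_mul]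
      _ = (g ^ a) ^ a' := by rw [hab]
      _ = g ^ (a * a') := by rw [← zpow_mul]
      _ = (g ^ a') ^ a := by rw [← zpow_mul, mul_comm]
      _ = (repc g ^ b') ^ a := by rw [hab']
      _ = repc g ^ (b' * a) := by rw [← zpow_mul]
  have hinj : Function.Injective (fun n : ℤ => repc g ^ n) :=
    injective_zpow_iff_not_isOfFinOrder.2 (repc_not_finOrder hg)
  have heq : b * a' = b' * a := hinj key
  have habs : |b| * a' = |b'| * a := by
    have := congrArg Int.natAbs heq
    rw [Int.natAbs_mul, Int.natAbs_mul] at this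
    have h1 : |b| * |a'| = |b'| * |a| := by
      rw [Int.abs_eq_natAbs, Int.abs_eq_natAbs, Int.abs_eq_natAbs, Int.abs_eq_natAbs]
      exact_mod_cast this
    rwa [abs_of_pos ha', abs_of_pos ha] at h1
  rw [div_eq_div_iff (by exact_mod_cast ha'.ne') (by exact_mod_cast ha.ne')]
  have : ((|b'| * a : ℤ) : ℚ) = ((|b| * a' : ℤ) : ℚ) := by exact_mod_cast congrArg (fun z : ℤ => (z : ℚ)) habs.symm
  push_cast at this ⊢
  linarith

private lemma qval_pos {g : G} (hg : ¬IsOfFinOrder g) : 0 < qval g := by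
  obtain ⟨⟨a, b⟩, ha, hb, hab⟩ := qval_ex hg
  rw [qval_eq hg ha hb hab]
  apply div_pos
  · exact_mod_cast abs_pos.2 hb
  · exact_mod_cast ha

private lemma qval_pow {g : G} (hg : ¬IsOfFinOrder g) {n : ℕ} (hn : 0 < n) :
    qval (g ^ n) = (n : ℚ) * qval g := by
  have hgn : ¬IsOfFinOrder (g ^ n) := fun h => hg (h.of_pow (by omega))
  obtain ⟨⟨a, b⟩, ha, hb, hab⟩ := qval_ex hg
  have hrep : repc (g ^ n) = repc g :=
    repc_eq ⟨1, n, one_ne_zero, by exact_mod_cast hn.ne', by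
      rw [zpow_one, zpow_natCast]⟩
  have hab2 : (g ^ n) ^ a = repc (g ^ n) ^ (b * n) := by
    rw [hrep, ← zpow_natCast g n, ← zpow_mul, mul_comm, zpow_mul, hab, ← zpow_mul, mul_comm]
  have := qval_eq hgn ha (mul_ne_zero hb (by exact_mod_cast hn.ne')) hab2
  rw [this, qval_eq hg ha hb hab]
  push_cast
  rw [abs_mul, abs_of_nonneg (by positivity : (0:ℚ) ≤ (n:ℚ))]
  ring

/-- `Int.log 2` increases by one when multiplying by 2 -/
private lemma log2_two_mul {q : ℚ} (hq : 0 < q) : Int.log 2 (2 * q) = Int.log 2 q + 1 := by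
  have h2 : (1:ℕ) < 2 := one_lt_two
  have hcast : ((2:ℕ) : ℚ) = 2 := by norm_num
  apply le_antisymm
  · have h1 : ((2:ℕ):ℚ) ^ (Int.log 2 (2 * q)) ≤ 2 * q := Int.zpow_log_le_self h2 (by positivity)
    have h3 : ((2:ℕ):ℚ) ^ (Int.log 2 (2 * q) - 1) ≤ q := by
      rw [zpow_sub₀ (by norm_num), zpow_one, hcast, div_le_iff₀ (by norm_num)]
      rw [hcast] at h1
      linarith
    have := (Int.zpow_le_iff_le_log h2 hq).mp h3
    omega
  · have h1 : ((2:ℕ):ℚ) ^ (Int.log 2 q) ≤ q := Int.zpow_log_le_self h2 hq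
    have h3 : ((2:ℕ):ℚ) ^ (Int.log 2 q + 1) ≤ 2 * q := by
      rw [zpow_add₀ (by norm_num), zpow_one, hcast]
      rw [hcast] at h1
      nlinarith
    exact (Int.zpow_le_iff_le_log h2 (by positivity)).mp h3

private lemma log2_pow_mul {q : ℚ} (hq : 0 < q) (k : ℕ) :
    Int.log 2 ((2:ℚ) ^ k * q) = k + Int.log 2 q := by
  induction k with
  | zero => simp
  | succ k ih =>
      have : (2:ℚ) ^ (k+1) * q = 2 * ((2:ℚ) ^ k * q) := by ring
      rw [this, log2_two_mul (by positivity), ih]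
      push_cast
      ring

open Classical in
/-- The coloring used in the forward direction. -/
private noncomputable def myc : G → Fin 2 := fun g =>
  if ¬IsOfFinOrder g then (if Even (Int.log 2 (qval g)) then 0 else 1)
  else if g * g = 1 then 0
  else if WellOrderingRel g g⁻¹ then 0 else 1

private lemma myc_inf {g : G} (hg : ¬IsOfFinOrder g) :
    myc g = if Even (Int.log 2 (qval g)) then 0 else 1 := by
  rw [myc, if_pos hg]

private lemma myc_pair {g : G} (hg : IsOfFinOrder g) (h2 : g * g ≠ 1) :
    myc g ≠ myc g⁻¹ := by
  have hginv : IsOfFinOrder g⁻¹ := hg.inv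
  have h2' : g⁻¹ * g⁻¹ ≠ 1 := by
    intro h
    apply h2
    have : (g * g)⁻¹ = 1 := by rw [mul_inv_rev]; exact h
    exact inv_eq_one.1 this
  have hne : g ≠ g⁻¹ := by
    intro h
    apply h2
    nth_rewrite 2 [h]
    simp
  rw [myc, if_neg (not_not_intro hg), if_neg h2, myc, if_neg (not_not_intro hginv), if_neg h2',
    inv_inv]
  rcases trichotomous_of WellOrderingRel g g⁻¹ with hlt | heq | hgt
  · have : ¬WellOrderingRel g⁻¹ g := asymm hlt
    rw [if_pos hlt, if_neg this]
    decide
  · exact absurd heq hne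
  · have : ¬WellOrderingRel g g⁻¹ := asymm hgt
    rw [if_neg this, if_pos hgt]
    decide

end Forward

private lemma subgroup_eq_top_of_cofinite {Γ : Type*} [Group Γ] [Infinite Γ]
    (H : Subgroup Γ) (h : ((H : Set Γ))ᶜ.Finite) : H = ⊤ := by
  by_contra hne
  obtain ⟨g, hg⟩ : ∃ g : Γ, g ∉ H := by
    by_contra hc
    push_neg at hc
    exact hne ((Subgroup.eq_top_iff' H).2 hc)
  have hinf : (H : Set Γ).Infinite := by
    have := h.infinite_compl
    rwa [compl_compl] at this
  have hsub : (fun x => g * x) '' (H : Set Γ) ⊆ ((H : Set Γ))ᶜ := by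
    rintro _ ⟨x, hx, rfl⟩ hmem
    exact hg (by simpa using H.mul_mem hmem (H.inv_mem hx))
  exact (hinf.image ((mul_right_injective g).injOn)) (h.subset hsub)

private lemma exp_two_of_cofinite {Γ : Type*} [Group Γ] [Infinite Γ]
    (h : {g : Γ | g * g = 1}ᶜ.Finite) : ∀ g : Γ, g * g = 1 := by
  set S := {g : Γ | g * g = 1} with hSdef
  -- involutions that multiply to an involution commute
  have hsq : ∀ a ∈ S, ∀ b ∈ S, a * b ∈ S → a * b = b * a := by
    intro a ha b hb hab
    have hx : ∀ x ∈ S, x⁻¹ = x := fun x hx => inv_eq_of_mul_eq_one_left hx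
    calc a * b = (a * b)⁻¹ := (hx _ hab).symm
      _ = b⁻¹ * a⁻¹ := mul_inv_rev a b
      _ = b * a := by rw [hx b hb, hx a ha]
  -- involutions are central
  have hcen : ∀ a ∈ S, ∀ g : Γ, a * g = g * a := by
    intro a ha
    have hcof : ((Subgroup.centralizer {a} : Subgroup Γ) : Set Γ)ᶜ.Finite := by
      apply Set.Finite.subset (h.union (h.preimage ((mul_right_injective a).injOn)))
      intro g hgc
      simp only [Set.mem_compl_iff, SetLike.mem_coe,
        Subgroup.mem_centralizer_singleton_iff] at hgc
      by_contra hcon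
      simp only [Set.mem_union, Set.mem_compl_iff, Set.mem_preimage] at hcon
      push_neg at hcon
      obtain ⟨hgS, hagS⟩ := hcon
      exact hgc ((hsq a ha g hgS hagS).symm)
    have := subgroup_eq_top_of_cofinite _ hcof
    intro g
    have hg : g ∈ Subgroup.centralizer {a} := this ▸ Subgroup.mem_top g
    exact (Subgroup.mem_centralizer_singleton_iff.1 hg).symm
  intro g
  -- find a ∈ S with a * g ∈ S
  have : ∃ a, a ∈ S ∧ a * g ∈ S := by
    have hbad : (Sᶜ ∪ (fun a => a * g) ⁻¹' Sᶜ).Finite :=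
      h.union (h.preimage ((mul_left_injective g).injOn))
    obtain ⟨a, ha⟩ := hbad.infinite_compl.nonempty
    simp only [Set.mem_compl_iff, Set.mem_union, Set.mem_preimage] at ha
    push_neg at ha
    obtain ⟨h1, h2⟩ := ha
    exact ⟨a, h1, h2⟩
  obtain ⟨a, ha, hag⟩ := this
  have hg_eq : g = a * (a * g) := by
    rw [← mul_assoc, ha, one_mul]
  have hcomm : a * (a * g) = (a * g) * a := hcen a ha (a * g)
  calc g * g = (a * (a * g)) * (a * (a * g)) := by rw [← hg_eq]
    _ = a * (((a * g) * a) * (a * g)) := by simp only [mul_assoc]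
    _ = a * ((a * (a * g)) * (a * g)) := by rw [← hcomm]
    _ = (a * a) * ((a * g) * (a * g)) := by simp only [mul_assoc]
    _ = 1 := by rw [ha, hag, one_mul]

private lemma exists_embed_of_expTwo {Γ : Type*} [Group Γ] [Infinite Γ]
    (h2 : ∀ g : Γ, g * g = 1) :
    ∃ f : Multiplicative (DirectSum ℕ (fun _ => ZMod 2)) →* Γ, Function.Injective f := by
  haveI : Fact (Nat.Prime 2) := ⟨Nat.prime_two⟩
  have hcomm : ∀ a b : Γ, a * b = b * a := by
    intro a b
    have h1 : (a * b) * (a * b) = 1 := h2 (a * b)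
    calc a * b = (a * b)⁻¹ := (inv_eq_of_mul_eq_one_left h1).symm
      _ = b⁻¹ * a⁻¹ := by rw [mul_inv_rev]
      _ = b * a := by rw [inv_eq_of_mul_eq_one_left (h2 b), inv_eq_of_mul_eq_one_left (h2 a)]
  letI : AddCommGroup (Additive Γ) :=
    { (inferInstance : AddGroup (Additive Γ)) with add_comm := hcomm }
  letI : Module (ZMod 2) (Additive Γ) := AddCommGroup.zmodModule (n := 2) (fun x => by
    rw [two_nsmul]
    exact h2 x.toMul)
  set ι := Module.Basis.ofVectorSpaceIndex (ZMod 2) (Additive Γ) with hι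
  let B : Module.Basis ι (ZMod 2) (Additive Γ) := Module.Basis.ofVectorSpace (ZMod 2) (Additive Γ)
  haveI : Infinite ι := by
    rw [← not_finite_iff_infinite]
    intro hfin
    haveI : Finite (ι →₀ ZMod 2) :=
      Finite.of_injective (fun f : ι →₀ ZMod 2 => (f : ι → ZMod 2)) DFunLike.coe_injective
    haveI : Finite (Additive Γ) := Finite.of_equiv _ B.repr.toEquiv.symm
    haveI : Finite Γ := Finite.of_equiv _ (Additive.toMul (α := Γ))
    exact not_finite Γ
  let e : ℕ ↪ ι := Infinite.natEmbedding ι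
  let L1 : (ℕ →₀ ZMod 2) →ₗ[ZMod 2] (ι →₀ ZMod 2) := Finsupp.lmapDomain _ _ e
  let L2 : DirectSum ℕ (fun _ => ZMod 2) ≃ₗ[ZMod 2] (ℕ →₀ ZMod 2) :=
    (finsuppLEquivDirectSum (ZMod 2) (ZMod 2) ℕ).symm
  let L : DirectSum ℕ (fun _ => ZMod 2) →ₗ[ZMod 2] Additive Γ :=
    (B.repr.symm.toLinearMap.comp (L1.comp L2.toLinearMap))
  have hLinj : Function.Injective L := by
    intro x y hxy
    simp only [L, L1, LinearMap.comp_apply, LinearEquiv.coe_coe, Finsupp.lmapDomain_apply] at hxy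
    exact L2.injective (Finsupp.mapDomain_injective e.injective (B.repr.symm.injective hxy))
  refine ⟨AddMonoidHom.toMultiplicativeLeft L.toAddMonoidHom, ?_⟩
  intro x y hxy
  have : L x.toAdd = L y.toAdd := hxy
  exact hLinj this

/-! ### Membership of powers in a subsemigroup -/

private lemma mem_pow_ssg {G : Type*} [Group G] {T : Subsemigroup G} {x : G} (hx : x ∈ T) :
    ∀ n : ℕ, 0 < n → x ^ n ∈ T := by
  intro n hn
  induction n with
  | zero => omega
  | succ m ih =>
      rcases Nat.eq_zero_or_pos m with h | h
      · subst h; simpa using hx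
      · rw [pow_succ]; exact T.mul_mem (ih h) hx

/-- A group `G` satisfies: for each 2-coloring of `G` there is an infinite
almost-monochromatic subsemigroup of `G`, if and only if `G` contains a subgroup
isomorphic to `⊕ₙ ℤ/2`. -/
theorem almostMono_iff_directSum_zmod2 (G : Type*) [Group G] :
    (∀ c : G → Fin 2, ∃ T : Subsemigroup G, Infinite T ∧
      ∃ col : Fin 2, {x ∈ (T : Set G) | c x ≠ col}.Finite) ↔
    ∃ f : Multiplicative (DirectSum ℕ (fun _ => ZMod 2)) →* G,
      Function.Injective f := by
  constructor
  · intro hyp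
    obtain ⟨T, hTinf, col, hfin⟩ := hyp myc
    by_cases hex : ∃ x ∈ (T : Set G), ¬IsOfFinOrder x
    · -- an element of infinite order gives infinitely many wrongly colored elements
      exfalso
      obtain ⟨x, hxT, hx⟩ := hex
      set L := Int.log 2 (qval x) with hL
      have hcolk : ∀ k : ℕ, myc (x ^ 2 ^ k) = if Even ((k : ℤ) + L) then 0 else 1 := by
        intro k
        have hxk : ¬IsOfFinOrder (x ^ 2 ^ k) := fun h => hx (h.of_pow (by positivity))
        rw [myc_inf hxk, qval_pow hx (by positivity)]
        have hc : ((2 ^ k : ℕ) : ℚ) = (2:ℚ) ^ k := by push_cast; ring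
        rw [hc, log2_pow_mul (qval_pos hx)]
      have hpar : ∀ (j r : ℕ), Even (((2*j+r : ℕ) : ℤ) + L) ↔ Even (((r:ℕ) : ℤ) + L) := by
        intro j r
        rw [Int.even_iff, Int.even_iff]
        push_cast
        omega
      have hv01 : (if Even (((0:ℕ):ℤ) + L) then (0 : Fin 2) else 1) ≠
          (if Even (((1:ℕ):ℤ) + L) then (0 : Fin 2) else 1) := by
        by_cases hE : Even (((0:ℕ):ℤ) + L)
        · have hO : ¬ Even (((1:ℕ):ℤ) + L) := by
            rw [Int.even_iff] at hE ⊢; push_cast at hE ⊢; omega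
          rw [if_pos hE, if_neg hO]; decide
        · have hO : Even (((1:ℕ):ℤ) + L) := by
            rw [Int.even_iff] at hE ⊢; push_cast at hE ⊢; omega
          rw [if_neg hE, if_pos hO]; decide
      have hr : ∃ r : ℕ, (if Even (((r:ℕ):ℤ) + L) then (0 : Fin 2) else 1) ≠ col := by
        by_cases h0 : (if Even (((0:ℕ):ℤ) + L) then (0 : Fin 2) else 1) = col
        · exact ⟨1, fun h => hv01 (h0.trans h.symm)⟩
        · exact ⟨0, h0⟩
      obtain ⟨r, hr⟩ := hr
      have hmem : ∀ j : ℕ, x ^ 2 ^ (2*j + r) ∈ {y ∈ (T : Set G) | myc y ≠ col} := by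
        intro j
        refine ⟨mem_pow_ssg hxT _ (by positivity), ?_⟩
        rw [hcolk, if_congr (hpar j r) rfl rfl]
        exact hr
      have hinj : Function.Injective (fun j : ℕ => x ^ 2 ^ (2*j + r)) := by
        intro i j hij
        have hpinj : Function.Injective (fun n : ℕ => x ^ n) :=
          injective_pow_iff_not_isOfFinOrder.2 hx
        have h1 : 2 ^ (2*i + r) = 2 ^ (2*j + r) := hpinj hij
        have h2 := Nat.pow_right_injective (le_refl 2) h1
        omega
      exact (Set.infinite_of_injective_forall_mem hinj hmem) hfin
    · push_neg at hex
      -- T is a torsion subsemigroup, hence a subgroup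
      have hone : (1 : G) ∈ T := by
        obtain ⟨t, ht⟩ := (Set.infinite_coe_iff.mp hTinf).nonempty
        obtain ⟨n, hn, hpow⟩ := isOfFinOrder_iff_pow_eq_one.1 (hex t ht)
        rw [← hpow]
        exact mem_pow_ssg ht n hn
      have hinv : ∀ t : G, t ∈ T → t⁻¹ ∈ T := by
        intro t ht
        obtain ⟨n, hn, hpow⟩ := isOfFinOrder_iff_pow_eq_one.1 (hex t ht)
        rcases Nat.eq_zero_or_pos (n - 1) with h0 | h0
        · have hn1 : n = 1 := by omega
          subst hn1
          have ht1 : t = 1 := by simpa using hpow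
          rw [ht1, inv_one]
          exact hone
        · have hinv_eq : t⁻¹ = t ^ (n - 1) := by
            apply inv_eq_of_mul_eq_one_right
            rw [← pow_succ', show n - 1 + 1 = n from by omega, hpow]
          rw [hinv_eq]
          exact mem_pow_ssg ht _ h0
      set T' : Subgroup G :=
        { carrier := (T : Set G),
          mul_mem' := fun ha hb => T.mul_mem ha hb,
          one_mem' := hone,
          inv_mem' := fun {x} hx => hinv x hx } with hT'
      -- only finitely many non-involutions in T
      have hNfin : {t : G | t ∈ T ∧ t * t ≠ 1}.Finite := by
        have hsub : {t : G | t ∈ T ∧ t * t ≠ 1} ⊆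
            {x ∈ (T : Set G) | myc x ≠ col} ∪
              (Inv.inv '' {x ∈ (T : Set G) | myc x ≠ col}) := by
          rintro t ⟨htT, ht2⟩
          have hfo := hex t htT
          have hpair := myc_pair hfo ht2
          by_cases hct : myc t = col
          · right
            refine ⟨t⁻¹, ⟨hinv t htT, fun h => hpair (hct.trans h.symm)⟩, inv_inv t⟩
          · left
            exact ⟨htT, hct⟩
        exact (hfin.union (hfin.image _)).subset hsub
      haveI hTinf' : Infinite ↥T' :=
        Infinite.of_injective (fun t : ↥T => (⟨t.1, t.2⟩ : ↥T'))
          (fun a b h => Subtype.ext (congrArg Subtype.val h))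
      have hcof : {g : ↥T' | g * g = 1}ᶜ.Finite := by
        have hval : {g : ↥T' | g * g = 1}ᶜ ⊆
            Subtype.val ⁻¹' {t : G | t ∈ T ∧ t * t ≠ 1} := by
          intro g hg
          simp only [Set.mem_compl_iff, Set.mem_setOf_eq] at hg
          refine ⟨g.2, fun hcon => hg (Subtype.ext (by simpa using hcon))⟩
        exact (hNfin.preimage (Subtype.val_injective.injOn)).subset hval
      obtain ⟨f0, hf0⟩ := exists_embed_of_expTwo (exp_two_of_cofinite hcof)
      refine ⟨T'.subtype.comp f0, ?_⟩
      intro a b h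
      exact hf0 (Subtype.val_injective h)
  · rintro ⟨f, hf⟩ c
    exact backward_dir f hf c
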